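/- Let x̄ ∈ ℝ^n, M > 0, and let x* be a global minimizer over ℝ^n of y ↦ s_M(y; x̄) with x* ≠ x̄. Set r := ‖x* − x̄‖ and δ := (M/(p+1)!)‖x* − x̄‖ + M·p·‖x* − x̄‖ + L_g Σ_{j=2}^{p} ‖D_y^j T_p^F(y; x̄)|_{y=x*}‖ · ‖x* − x̄‖^{j−p}. Then the criticality measure of the subproblem satisfies M_{s_M(·;x̄)}^{r}(x*) ≤ δ ‖x* − x̄‖^{p}. -/

import Mathlib

open scoped BigOperators RealInnerProductSpace

noncomputable section

/-- The vector `(F_1(x), …, F_m(x)) ∈ ℝ^m` (with the Euclidean norm). -/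
def euclMap {n m : ℕ} (F : Fin m → EuclideanSpace ℝ (Fin n) → ℝ)
    (x : EuclideanSpace ℝ (Fin n)) : EuclideanSpace ℝ (Fin m) :=
  (EuclideanSpace.equiv (Fin m) ℝ).symm fun i => F i x

/-- The vector `T_p^F(y; x)` of `p`-th order Taylor approximations of the components
`F_i` around the center `x`, evaluated at `y`. -/
def taylorMap (p : ℕ) {n m : ℕ} (F : Fin m → EuclideanSpace ℝ (Fin n) → ℝ)
    (y x : EuclideanSpace ℝ (Fin n)) : EuclideanSpace ℝ (Fin m) :=
  (EuclideanSpace.equiv (Fin m) ℝ).symm fun i =>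
    ∑ j ∈ Finset.range (p + 1),
      (1 / (Nat.factorial j : ℝ)) * iteratedFDeriv ℝ j (F i) x (fun _ => y - x)

/-- The composite objective `f(x) = g(F(x)) + h(x)`. -/
def fObj {n m : ℕ} (F : Fin m → EuclideanSpace ℝ (Fin n) → ℝ)
    (g : EuclideanSpace ℝ (Fin m) → ℝ) (h : EuclideanSpace ℝ (Fin n) → ℝ)
    (x : EuclideanSpace ℝ (Fin n)) : ℝ :=
  g (euclMap F x) + h x

/-- The regularized higher-order Taylor model
`s_M(y; x̄) = g(T_p^F(y; x̄)) + (M/(p+1)!)‖y − x̄‖^{p+1} + h(y)`. -/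
def sModel (p : ℕ) {n m : ℕ} (F : Fin m → EuclideanSpace ℝ (Fin n) → ℝ)
    (g : EuclideanSpace ℝ (Fin m) → ℝ) (h : EuclideanSpace ℝ (Fin n) → ℝ) (M : ℝ)
    (y xb : EuclideanSpace ℝ (Fin n)) : ℝ :=
  g (taylorMap p F y xb) + M / (Nat.factorial (p + 1) : ℝ) * ‖y - xb‖ ^ (p + 1) + h y

/-- The criticality measure `M^r_{s_M(·;x̄)}(x)` of the regularized Taylor model,
with the linearization minimized over `{y' ∈ C : ‖y' − x‖ ≤ r}`. -/
def subCrit (p : ℕ) {n m : ℕ} (F : Fin m → EuclideanSpace ℝ (Fin n) → ℝ)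
    (g : EuclideanSpace ℝ (Fin m) → ℝ) (h : EuclideanSpace ℝ (Fin n) → ℝ) (M : ℝ)
    (C : Set (EuclideanSpace ℝ (Fin n))) (r : ℝ)
    (xb x : EuclideanSpace ℝ (Fin n)) : ℝ :=
  g (taylorMap p F x xb) + h x -
    sInf ((fun y' =>
        g (taylorMap p F x xb + (fderiv ℝ (fun y => taylorMap p F y xb) x) (y' - x)) +
          M / (Nat.factorial p : ℝ) * ‖x - xb‖ ^ (p - 1) * ⟪x - xb, y' - x⟫ + h y') ''
      {y' | y' ∈ C ∧ ‖y' - x‖ ≤ r})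

/-! ### Auxiliary lemmas -/

lemma taylor_finite_series (p : ℕ) {n m : ℕ} (F : Fin m → EuclideanSpace ℝ (Fin n) → ℝ)
    (xb : EuclideanSpace ℝ (Fin n)) :
    HasFiniteFPowerSeriesOnBall (fun y => taylorMap p F y xb)
      (fun j => if j ≤ p then
        (Nat.factorial j : ℝ)⁻¹ •
          (((EuclideanSpace.equiv (Fin m) ℝ).symm :
              (Fin m → ℝ) →L[ℝ] EuclideanSpace ℝ (Fin m)).compContinuousMultilinearMap
            (ContinuousMultilinearMap.pi (fun i => iteratedFDeriv ℝ j (F i) xb)))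
        else 0) xb (p + 1) ⊤ := by
  apply HasFiniteFPowerSeriesOnBall.mk'
  · intro j hj
    rw [if_neg (by omega)]
  · exact ENNReal.zero_lt_top
  · intro y _
    have h1 : ∀ i ∈ Finset.range (p+1), i ≤ p := fun i hi => by
      simp only [Finset.mem_range] at hi; omega
    rw [Finset.sum_congr rfl (fun i hi => by rw [if_pos (h1 i hi)])]
    simp only [taylorMap, ContinuousMultilinearMap.smul_apply,
      ContinuousLinearMap.compContinuousMultilinearMap_coe, Function.comp_apply,
      ContinuousMultilinearMap.pi_apply, add_sub_cancel_left]
    apply (EuclideanSpace.equiv (Fin m) ℝ).injective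
    rw [map_sum]
    simp only [map_smul, ContinuousLinearEquiv.coe_coe, ContinuousLinearEquiv.apply_symm_apply]
    funext idx
    simp [Finset.sum_apply, one_div, ContinuousMultilinearMap.pi_apply]

lemma taylor_exact (p : ℕ) {n m : ℕ} (F : Fin m → EuclideanSpace ℝ (Fin n) → ℝ)
    (xb xs d : EuclideanSpace ℝ (Fin n)) :
    taylorMap p F (xs + d) xb = ∑ j ∈ Finset.range (p + 1),
      (Nat.factorial j : ℝ)⁻¹ •
        iteratedFDeriv ℝ j (fun y => taylorMap p F y xb) xs (fun _ => d) := by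
  have hq := taylor_finite_series p F xb
  have h2 := hq.changeOrigin (y := xs - xb) (by exact ENNReal.coe_lt_top)
  rw [add_sub_cancel] at h2
  have h3 := h2.toHasFPowerSeriesOnBall
  have hd : d ∈ Metric.eball (0 : EuclideanSpace ℝ (Fin n)) (⊤ - ↑‖xs - xb‖₊) := by
    rw [ENNReal.top_sub_coe]
    simp [edist_lt_top]
  have hsum := h3.hasSum hd
  refine (hsum.unique (hasSum_sum_of_ne_finset_zero fun b hb => ?_)).trans
    (Finset.sum_congr rfl fun j hj => ?_)
  · rw [h2.finite b (by simpa using hb)]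
    rfl
  have hfs := h3.factorial_smul d j
  rw [← hfs, ← Nat.cast_smul_eq_nsmul ℝ, smul_smul,
    inv_mul_cancel₀ (by exact_mod_cast j.factorial_ne_zero), one_smul]

lemma natfact (k : ℕ) : 2^(k+2) ≤ (k+1) * Nat.factorial (k+2) + k + 4 := by
  induction k with
  | zero => decide
  | succ k ih =>
    have h1 : 2 ≤ Nat.factorial (k+2) := le_trans (by omega) (Nat.self_le_factorial _)
    have h4 : (k*k+3*k+4) * 2 ≤ (k*k+3*k+4) * Nat.factorial (k+2) := Nat.mul_le_mul_left _ h1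
    have h2 : Nat.factorial (k+3) = (k+3) * Nat.factorial (k+2) := rfl
    have h3 : 2^(k+3) = 2 * 2^(k+2) := by ring
    show 2 ^ (k + 3) ≤ (k + 2) * Nat.factorial (k + 3) + (k + 1) + 4
    rw [h2]
    nlinarith [ih, h4, h3]

lemma core_ineq (p : ℕ) (hp : 1 ≤ p) {r b s I : ℝ} (hr : 0 < r) (hb : 0 ≤ b) (hs : 0 ≤ s)
    (hsr : s ≤ r) (hbr : b ≤ 2*r) (hI : I = (b^2 - r^2 - s^2)/2) :
    b^(p+1) - r^(p+1) - (p+1) * r^(p-1) * I ≤ (1 + p * (Nat.factorial (p+1) : ℝ)) * r^(p+1) := by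
  obtain ⟨k, rfl⟩ : ∃ k, p = k + 1 := ⟨p - 1, by omega⟩
  simp only [Nat.add_sub_cancel, hI]
  have hA : (0:ℝ) ≤ r^k := pow_nonneg hr.le k
  have T : b^(k+2) ≤ 2^k * r^k * b^2 := by
    calc b^(k+2) = b^k * b^2 := by ring
    _ ≤ (2*r)^k * b^2 := mul_le_mul_of_nonneg_right (pow_le_pow_left₀ hb hbr k) (sq_nonneg b)
    _ = 2^k * r^k * b^2 := by rw [mul_pow]
  have hcoef : ((k:ℝ)+2)/2 ≤ 2^k := by
    have h : k+1 < 2^(k+1) := Nat.lt_two_pow_self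
    have h' : ((k:ℝ)+2) ≤ 2^(k+1) := by exact_mod_cast h
    have : (2:ℝ)^(k+1) = 2*2^k := by ring
    linarith
  have hb4 : b^2 ≤ 4*r^2 := by nlinarith
  have hsq : s^2 ≤ r^2 := by nlinarith
  have hprod : 0 ≤ (2^k - ((k:ℝ)+2)/2) * ((4*r^2 - b^2) * r^k) :=
    mul_nonneg (by linarith) (mul_nonneg (by linarith) hA)
  have hXs2 : 0 ≤ ((k:ℝ)+2) * (r^k * (r^2 - s^2)) :=
    mul_nonneg (by positivity) (mul_nonneg hA (by linarith))
  have hXa : (0:ℝ) ≤ r^k * r^2 := mul_nonneg hA (sq_nonneg r)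
  have hfact : (2:ℝ)^(k+2) ≤ ((k:ℝ)+1) * (Nat.factorial (k+2) : ℝ) + (k:ℝ) + 4 := by
    exact_mod_cast natfact k
  have h24 : (2:ℝ)^(k+2) = 4*2^k := by ring
  have hfact' : (4*(2:ℝ)^k) * (r^k*r^2)
      ≤ (((k:ℝ)+1) * (Nat.factorial (k+2) : ℝ) + (k:ℝ) + 4) * (r^k*r^2) := by
    apply mul_le_mul_of_nonneg_right _ hXa
    linarith [hfact, h24]
  have hrk2 : r^(k+2) = r^k * r^2 := by ring
  push_cast
  show b^(k+2) - r^(k+2) - ((k:ℝ)+1+1) * r^k * ((b^2-r^2-s^2)/2)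
      ≤ (1 + ((k:ℝ)+1) * (Nat.factorial (k+2) : ℝ)) * r^(k+2)
  rw [hrk2]
  nlinarith [T, hprod, hXs2, hfact']

/-- a global minimizer `x*` of the regularized Taylor model, with
`x* ≠ x̄`, approximately annihilates the criticality measure of the subproblem:
`M^{r}_{s_M(·;x̄)}(x*) ≤ δ ‖x* − x̄‖^p` for `r = ‖x* − x̄‖` and an explicit `δ`. -/
theorem stmt5 {n m : ℕ} (hn : 1 ≤ n) (hm : 1 ≤ m) (p : ℕ) (hp : 1 ≤ p)
    (F : Fin m → EuclideanSpace ℝ (Fin n) → ℝ)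
    (Lp : EuclideanSpace ℝ (Fin m))
    (hFd : ∀ i, ContDiff ℝ p (F i))
    (hFlip : ∀ i (x y : EuclideanSpace ℝ (Fin n)),
      ‖iteratedFDeriv ℝ p (F i) x - iteratedFDeriv ℝ p (F i) y‖ ≤ Lp i * ‖x - y‖)
    (g : EuclideanSpace ℝ (Fin m) → ℝ) (Lg : ℝ)
    (hgconv : ConvexOn ℝ Set.univ g)
    (hglip : ∀ a b : EuclideanSpace ℝ (Fin m), |g a - g b| ≤ Lg * ‖a - b‖)
    (h : EuclideanSpace ℝ (Fin n) → ℝ) (hhconv : ConvexOn ℝ Set.univ h)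
    (hhcont : Continuous h)
    (M : ℝ) (hM : 0 < M)
    (xb xs : EuclideanSpace ℝ (Fin n))
    (hxs : ∀ z : EuclideanSpace ℝ (Fin n), sModel p F g h M xs xb ≤ sModel p F g h M z xb)
    (hne : xs ≠ xb)
    (δ : ℝ)
    (hδ : δ = M / (Nat.factorial (p + 1) : ℝ) * ‖xs - xb‖ + M * p * ‖xs - xb‖ +
      Lg * ∑ j ∈ Finset.Icc 2 p,
        ‖iteratedFDeriv ℝ j (fun y => taylorMap p F y xb) xs‖ *
          ‖xs - xb‖ ^ ((j : ℝ) - (p : ℝ))) :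
    subCrit p F g h M Set.univ ‖xs - xb‖ xb xs ≤ δ * ‖xs - xb‖ ^ p := by
  have hr : (0:ℝ) < ‖xs - xb‖ := norm_pos_iff.mpr (sub_ne_zero_of_ne hne)
  have hLg : 0 ≤ Lg := by
    have h0 := hglip (EuclideanSpace.single (⟨0, hm⟩ : Fin m) (1:ℝ)) 0
    rw [sub_zero, EuclideanSpace.norm_single, norm_one, mul_one] at h0
    have h1 := abs_nonneg (g (EuclideanSpace.single (⟨0, hm⟩ : Fin m) (1:ℝ)) - g 0)
    linarith
  set r := ‖xs - xb‖ with hrdef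
  set S := ∑ j ∈ Finset.Icc 2 p,
      ‖iteratedFDeriv ℝ j (fun y => taylorMap p F y xb) xs‖ * r ^ j with hSdef
  have hterm : ∀ j : ℕ, r ^ ((j:ℝ) - (p:ℝ)) * r ^ p = (r:ℝ) ^ j := by
    intro j
    rw [← Real.rpow_natCast r p, ← Real.rpow_add hr, sub_add_cancel, Real.rpow_natCast]
  have hsum' : (∑ j ∈ Finset.Icc 2 p,
      ‖iteratedFDeriv ℝ j (fun y => taylorMap p F y xb) xs‖ * r ^ ((j:ℝ)-(p:ℝ))) * r ^ p
      = S := by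
    rw [Finset.sum_mul]
    exact Finset.sum_congr rfl fun j _ => by rw [mul_assoc, hterm j]
  have hδr : δ * r ^ p = M / (Nat.factorial (p+1) : ℝ) * r^(p+1) + M * p * r^(p+1) + Lg * S := by
    rw [hδ, add_mul, add_mul, mul_assoc Lg, hsum', pow_succ]
    ring
  unfold subCrit
  rw [← hrdef]
  have key : g (taylorMap p F xs xb) + h xs - δ * r ^ p ≤
      sInf ((fun y' =>
        g (taylorMap p F xs xb + (fderiv ℝ (fun y => taylorMap p F y xb) xs) (y' - xs)) +
          M / (Nat.factorial p : ℝ) * r ^ (p - 1) * ⟪xs - xb, y' - xs⟫ + h y') ''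
      {y' | y' ∈ Set.univ ∧ ‖y' - xs‖ ≤ r}) := by
    apply le_csInf
    · exact ⟨_, Set.mem_image_of_mem _ ⟨Set.mem_univ xs, by simp [hr.le]⟩⟩
    · rintro b ⟨y', ⟨-, hd⟩, rfl⟩
      dsimp only
      -- Taylor expansion
      have hTE := taylor_exact p F xb xs (y' - xs)
      rw [add_sub_cancel] at hTE
      have hsplit : Finset.range (p+1) = insert 0 (insert 1 (Finset.Icc 2 p)) := by
        ext a
        simp only [Finset.mem_range, Finset.mem_insert, Finset.mem_Icc]
        omega
      rw [hsplit, Finset.sum_insert (by simp), Finset.sum_insert (by simp)] at hTE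
      simp only [Nat.factorial_zero, Nat.factorial_one, Nat.cast_one, inv_one, one_smul,
        iteratedFDeriv_zero_apply, iteratedFDeriv_one_apply] at hTE
      -- bound on the remainder
      have hErr : ‖∑ j ∈ Finset.Icc 2 p, (Nat.factorial j : ℝ)⁻¹ •
          iteratedFDeriv ℝ j (fun y => taylorMap p F y xb) xs (fun _ => y' - xs)‖ ≤ S := by
        refine (norm_sum_le _ _).trans (Finset.sum_le_sum fun j hj => ?_)
        rw [norm_smul]
        have h1 : ‖((Nat.factorial j : ℝ))⁻¹‖ ≤ 1 := by
          rw [Real.norm_eq_abs, abs_of_nonneg (by positivity), inv_le_one₀ (by positivity)]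
          exact_mod_cast Nat.one_le_iff_ne_zero.mpr j.factorial_ne_zero
        have h2 : ‖iteratedFDeriv ℝ j (fun y => taylorMap p F y xb) xs (fun _ => y' - xs)‖
            ≤ ‖iteratedFDeriv ℝ j (fun y => taylorMap p F y xb) xs‖ * r ^ j := by
          refine (ContinuousMultilinearMap.le_opNorm _ _).trans ?_
          refine mul_le_mul_of_nonneg_left ?_ (norm_nonneg _)
          calc (∏ _i : Fin j, ‖y' - xs‖) = ‖y' - xs‖ ^ j := by
                rw [Finset.prod_const, Finset.card_univ, Fintype.card_fin]
            _ ≤ r ^ j := pow_le_pow_left₀ (norm_nonneg _) hd j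
        have h3 := mul_le_mul h1 h2 (norm_nonneg _) zero_le_one
        rw [one_mul] at h3
        exact h3
      -- Lipschitz step
      have hglip' := hglip (taylorMap p F y' xb)
        (taylorMap p F xs xb + (fderiv ℝ (fun y => taylorMap p F y xb) xs) (y' - xs))
      have hdiff : taylorMap p F y' xb -
          (taylorMap p F xs xb + (fderiv ℝ (fun y => taylorMap p F y xb) xs) (y' - xs))
          = ∑ j ∈ Finset.Icc 2 p, (Nat.factorial j : ℝ)⁻¹ •
            iteratedFDeriv ℝ j (fun y => taylorMap p F y xb) xs (fun _ => y' - xs) := by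
        rw [hTE]; abel
      rw [hdiff] at hglip'
      have hK3 : g (taylorMap p F y' xb) - Lg * S ≤
          g (taylorMap p F xs xb + (fderiv ℝ (fun y => taylorMap p F y xb) xs) (y' - xs)) := by
        have h5 : Lg * ‖∑ j ∈ Finset.Icc 2 p, (Nat.factorial j : ℝ)⁻¹ •
            iteratedFDeriv ℝ j (fun y => taylorMap p F y xb) xs (fun _ => y' - xs)‖ ≤ Lg * S :=
          mul_le_mul_of_nonneg_left hErr hLg
        have h6 := (le_abs_self _).trans (hglip'.trans h5)
        linarith
      -- minimality
      have hK4 := hxs y'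
      simp only [sModel] at hK4
      rw [← hrdef] at hK4
      -- inner product identity
      have hv : y' - xb = (xs - xb) + (y' - xs) := by abel
      have hinner : ⟪xs - xb, y' - xs⟫ = (‖y' - xb‖^2 - r^2 - ‖y' - xs‖^2)/2 := by
        rw [hv, norm_add_sq_real, ← hrdef]
        ring
      have hb2r : ‖y' - xb‖ ≤ 2*r := by
        calc ‖y' - xb‖ = ‖(xs - xb) + (y' - xs)‖ := by rw [hv]
          _ ≤ ‖xs - xb‖ + ‖y' - xs‖ := norm_add_le _ _
          _ ≤ 2*r := by rw [← hrdef]; linarith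
      have hcore := core_ineq p hp hr (norm_nonneg (y' - xb)) (norm_nonneg (y' - xs))
        hd hb2r hinner
      -- the regularizer inequality
      have hfacpos : (0:ℝ) < (Nat.factorial (p+1) : ℝ) := by
        exact_mod_cast Nat.factorial_pos _
      have hfp : (0:ℝ) < (Nat.factorial p : ℝ) := by exact_mod_cast Nat.factorial_pos _
      have hfs : (Nat.factorial (p+1) : ℝ) = ((p:ℝ)+1) * (Nat.factorial p : ℝ) := by
        rw [Nat.factorial_succ]; push_cast; ring
      have hK6 : M / (Nat.factorial (p+1):ℝ) * ‖y' - xb‖^(p+1)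
          - M / (Nat.factorial (p+1):ℝ) * r^(p+1)
          - M / (Nat.factorial p : ℝ) * r^(p-1) * ⟪xs - xb, y' - xs⟫
          ≤ M / (Nat.factorial (p+1):ℝ) * r^(p+1) + M * p * r^(p+1) := by
        calc M / (Nat.factorial (p+1):ℝ) * ‖y' - xb‖^(p+1)
            - M / (Nat.factorial (p+1):ℝ) * r^(p+1)
            - M / (Nat.factorial p : ℝ) * r^(p-1) * ⟪xs - xb, y' - xs⟫
            = M / (Nat.factorial (p+1):ℝ) * (‖y' - xb‖^(p+1) - r^(p+1)
              - ((p:ℝ)+1) * r^(p-1) * ⟪xs - xb, y' - xs⟫) := by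
              rw [hfs]
              field_simp
          _ ≤ M / (Nat.factorial (p+1):ℝ) * ((1 + p * (Nat.factorial (p+1) : ℝ)) * r^(p+1)) := by
              apply mul_le_mul_of_nonneg_left _ (le_of_lt (div_pos hM hfacpos))
              exact_mod_cast hcore
          _ = M / (Nat.factorial (p+1):ℝ) * r^(p+1) + M * p * r^(p+1) := by
              field_simp
      linarith [hK3, hK4, hK6]
  linarith [key]

end
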